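/- Let ε ∈ (0,1), k ∈ ℤ_{≥0}, and let u ∈ H¹(Ω_ε)³ satisfy u·n_ε = 0 on ∂Ω_ε, where n_ε is the outward unit normal of Ω_ε := {x : 1 < |x| < 1+ε}. Then for a.e. y ∈ S², div_{S²}(M_ε^k u)(y) = (M_ε^{k+1}(div u))(y) + (k+1)(M_ε^k(u·n̄))(y), where n̄(x) = x/|x|. -/

import Mathlib

open MeasureTheory Matrix Metric
open scoped RealInnerProductSpace

noncomputable section

abbrev E3 : Type := EuclideanSpace ℝ (Fin 3)

def proj3 (y : E3) : Matrix (Fin 3) (Fin 3) ℝ :=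
  Matrix.of fun i j => (if i = j then (1:ℝ) else 0) - y i * y j

def pd (f : E3 → ℝ) (x : E3) (i : Fin 3) : ℝ :=
  fderiv ℝ f x (EuclideanSpace.single i 1)

def gradM (u : E3 → E3) (x : E3) : Matrix (Fin 3) (Fin 3) ℝ :=
  Matrix.of fun i j => fderiv ℝ (fun z => u z j) x (EuclideanSpace.single i 1)

def symM (A : Matrix (Fin 3) (Fin 3) ℝ) : Matrix (Fin 3) (Fin 3) ℝ :=
  (1/2 : ℝ) • (A + Aᵀ)

def tgradM (u : E3 → E3) (y : E3) : Matrix (Fin 3) (Fin 3) ℝ :=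
  proj3 y * gradM u y

def strainS (u : E3 → E3) (y : E3) : Matrix (Fin 3) (Fin 3) ℝ :=
  proj3 y * symM (tgradM u y) * proj3 y

def vE (v : E3 → E3) (x : E3) : E3 := ‖x‖ • v (‖x‖⁻¹ • x)

def ra (a : E3) : E3 → E3 := fun x => WithLp.toLp 2 (crossProduct a x)

def shell (ε : ℝ) : Set E3 := {x : E3 | 1 < ‖x‖ ∧ ‖x‖ < 1 + ε}

def sphM : Measure E3 := (Measure.hausdorffMeasure 2 : Measure E3).restrict (Metric.sphere (0:E3) 1)

def avg (ε : ℝ) (k : ℕ) (φ : E3 → ℝ) (y : E3) : ℝ :=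
  (1/ε) * ∫ r in (1:ℝ)..(1+ε), φ (r • y) * r ^ k

def avgV (ε : ℝ) (k : ℕ) (u : E3 → E3) (y : E3) : E3 :=
  WithLp.toLp 2 fun j => (1/ε) * ∫ r in (1:ℝ)..(1+ε), u (r • y) j * r ^ k

def div3 (u : E3 → E3) (x : E3) : ℝ :=
  ∑ i, fderiv ℝ (fun z => u z i) x (EuclideanSpace.single i 1)

def sdiv (F : E3 → E3) (y : E3) : ℝ :=
  ∑ j, ∑ i, proj3 y j i * fderiv ℝ (fun x => F (‖x‖⁻¹ • x) j) y (EuclideanSpace.single i 1)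

def frob2 (A : Matrix (Fin 3) (Fin 3) ℝ) : ℝ := ∑ i, ∑ j, (A i j)^2


lemma contDiffOn_nmap : ContDiffOn ℝ 1 (fun x : E3 => ‖x‖⁻¹ • x) {x : E3 | x ≠ 0} := by
  have h1 : ContDiffOn ℝ 1 (fun x : E3 => ‖x‖) {x : E3 | x ≠ 0} :=
    ContDiffOn.norm ℝ contDiffOn_id (fun x hx => hx)
  exact (h1.inv (fun x hx => norm_ne_zero_iff.mpr hx)).smul contDiffOn_id

lemma uj_contDiff (u : E3 → E3) (hu : ContDiff ℝ 1 u) (j : Fin 3) :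
    ContDiff ℝ 1 (fun z => u z j) := by
  have : (fun z => u z j) = fun z => (EuclideanSpace.proj j : E3 →L[ℝ] ℝ) (u z) := by
    funext z; simp
  rw [this]
  exact (EuclideanSpace.proj j : E3 →L[ℝ] ℝ).contDiff.comp hu

lemma hasFDerivAt_norm_unit (y : E3) (hy : ‖y‖ = 1) :
    HasFDerivAt (fun x : E3 => ‖x‖) (innerSL ℝ y) y := by
  have h1 : HasFDerivAt (fun x : E3 => ‖x‖ ^ 2) (2 • (innerSL ℝ y)) y :=
    (hasStrictFDerivAt_norm_sq y).hasFDerivAt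
  have h2 : HasDerivAt Real.sqrt (1 / (2 * Real.sqrt (‖y‖^2))) (‖y‖^2) :=
    (Real.hasStrictDerivAt_sqrt (by rw [hy]; norm_num)).hasDerivAt
  have h3 := h2.comp_hasFDerivAt y h1
  have e1 : (Real.sqrt ∘ fun x : E3 => ‖x‖^2) = fun x : E3 => ‖x‖ := by
    funext x; exact Real.sqrt_sq (norm_nonneg x)
  have e2 : (1 / (2 * Real.sqrt (‖y‖^2))) • (2 • (innerSL ℝ y)) = innerSL ℝ y := by
    rw [hy]
    ext v
    simp
  rw [e1, e2] at h3
  exact h3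

lemma hasFDerivAt_nmap (y : E3) (hy : ‖y‖ = 1) :
    HasFDerivAt (fun x : E3 => ‖x‖⁻¹ • x)
      (ContinuousLinearMap.id ℝ E3 - (innerSL ℝ y).smulRight y) y := by
  have hn := hasFDerivAt_norm_unit y hy
  have hinv : HasFDerivAt (fun x : E3 => ‖x‖⁻¹) ((-1 : ℝ) • (innerSL ℝ y : E3 →L[ℝ] ℝ)) y := by
    have h2 : HasDerivAt (fun t : ℝ => t⁻¹) (-(‖y‖^2)⁻¹) ‖y‖ := hasDerivAt_inv (by rw [hy]; norm_num)
    have h3 := h2.comp_hasFDerivAt y hn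
    rw [hy] at h3
    simpa [Function.comp_def] using h3
  have := hinv.smul (hasFDerivAt_id y)
  simp only [hy, inv_one, one_smul] at this
  refine HasFDerivAt.congr_fderiv this ?_
  ext v
  simp [ContinuousLinearMap.smulRight_apply]
  ring

lemma clm_apply_eq_sum (L : E3 →L[ℝ] ℝ) (y : E3) :
    L y = ∑ i, y i * L (EuclideanSpace.single i 1) := by
  have hy : y = ∑ i, y i • EuclideanSpace.single i (1:ℝ) := by
    ext j
    have : (∑ i, y i • EuclideanSpace.single i (1:ℝ)) j
        = ∑ i, (y i • EuclideanSpace.single i (1:ℝ)) j :=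
      by rw [WithLp.ofLp_sum]; exact Finset.sum_apply j Finset.univ _
    rw [this]
    simp [EuclideanSpace.single_apply]
  conv_lhs => rw [hy]
  simp [smul_eq_mul]

lemma key_sum (y a : Fin 3 → ℝ) (g : ℝ)
    (hs : ∑ i, y i * y i = 1) (hg : ∑ i, y i * a i = g) (j : Fin 3) :
    ∑ i, (((if j = i then (1:ℝ) else 0) - y j * y i) * ((a i - y i * g))) = a j - y j * g := by
  rw [Fin.sum_univ_three] at hs hg ⊢
  fin_cases j
  · simp_all
    linear_combination (-(y 0)) * hg + (y 0 * g) * hs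
  · simp_all
    linear_combination (-(y 1)) * hg + (y 1 * g) * hs
  · simp_all
    linear_combination (-(y 2)) * hg + (y 2 * g) * hs

lemma inner_eq_sum (x z : E3) : ⟪x, z⟫ = ∑ i, x i * z i := by
  rw [PiLp.inner_apply]
  refine Finset.sum_congr rfl fun i _ => ?_
  simp [mul_comm]

lemma sum_sq_one (y : E3) (hy : ‖y‖ = 1) : ∑ i, y i * y i = 1 := by
  have h2 : Real.sqrt (∑ i, ‖y i‖^2) = 1 := by rw [← EuclideanSpace.norm_eq]; exact hy
  have := Real.sqrt_eq_one.mp h2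
  calc ∑ i, y i * y i = ∑ i, ‖y i‖^2 := by
        apply Finset.sum_congr rfl; intro i _
        rw [Real.norm_eq_abs, sq_abs]; ring
    _ = 1 := this
lemma lemA (ε : ℝ) (hε0 : 0 < ε) (hε1 : ε < 1) (k : ℕ)
    (u : E3 → E3) (hu : ContDiff ℝ 1 u) (j : Fin 3)
    (y : E3) (hy : ‖y‖ = 1) :
    HasFDerivAt (fun x : E3 => ∫ r in (1:ℝ)..(1+ε), u (r • (‖x‖⁻¹ • x)) j * r^k)
      (∫ r in (1:ℝ)..(1+ε),
        (r^k * r) • ((fderiv ℝ (fun z => u z j) (r • (‖y‖⁻¹ • y))).comp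
          (fderiv ℝ (fun x : E3 => ‖x‖⁻¹ • x) y))) y := by
  set n : E3 → E3 := fun x => ‖x‖⁻¹ • x with hn_def
  set uj : E3 → ℝ := fun z => u z j with huj_def
  have hujc : ContDiff ℝ 1 uj := uj_contDiff u hu j
  set F : E3 → ℝ → ℝ := fun x r => uj (r • n x) * r^k with hF_def
  set F' : E3 → ℝ → E3 →L[ℝ] ℝ :=
    fun x r => (r^k * r) • ((fderiv ℝ uj (r • n x)).comp (fderiv ℝ n x)) with hF'_def
  have hyne : y ≠ 0 := fun h => by simp [h] at hy
  -- norm facts on the ball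
  have hball : ∀ x : E3, x ∈ ball y (1/2) → x ≠ 0 := by
    intro x hx h0
    have : dist x y < 1/2 := mem_ball.mp hx
    rw [h0, dist_eq_norm, zero_sub, norm_neg, hy] at this
    linarith
  have hnx_norm : ∀ x : E3, x ≠ 0 → ‖n x‖ = 1 := by
    intro x hx
    simp only [hn_def, norm_smul, norm_inv, norm_norm]
    exact inv_mul_cancel₀ (norm_ne_zero_iff.mpr hx)
  -- continuity of r ↦ n-scaled point
  have hcont_uj : Continuous uj := hujc.continuous
  have hcont_fuj : Continuous (fderiv ℝ uj) := hujc.continuous_fderiv one_ne_zero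
  -- bounds
  obtain ⟨C1, hC1⟩ := (isCompact_closedBall (0:E3) 2).exists_bound_of_continuousOn
    ((hcont_fuj).continuousOn (s := closedBall (0:E3) 2))
  have hCn_cont : ContinuousOn (fderiv ℝ n) {x : E3 | x ≠ 0} :=
    contDiffOn_nmap.continuousOn_fderiv_of_isOpen isOpen_ne le_rfl
  have hsub : closedBall y (1/2) ⊆ {x : E3 | x ≠ 0} := by
    intro x hx h0
    have : dist x y ≤ 1/2 := mem_closedBall.mp hx
    rw [h0, dist_eq_norm, zero_sub, norm_neg, hy] at this
    linarith
  obtain ⟨C2, hC2⟩ := (isCompact_closedBall y (1/2)).exists_bound_of_continuousOn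
    (hCn_cont.mono hsub)
  have hC1' : 0 ≤ C1 := le_trans (norm_nonneg _) (hC1 0 (by simp))
  have hC2' : 0 ≤ C2 := le_trans (norm_nonneg _) (hC2 y (by simp))
  -- differentiability of x ↦ F x r on the ball
  have h_diff : ∀ r : ℝ, ∀ x ∈ ball y (1/2), HasFDerivAt (fun x => F x r) (F' x r) x := by
    intro r x hx
    have hx0 := hball x hx
    have hnx : HasFDerivAt n (fderiv ℝ n x) x :=
      ((contDiffOn_nmap.contDiffAt (isOpen_ne.mem_nhds hx0)).differentiableAt one_ne_zero).hasFDerivAt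
    have hscale : HasFDerivAt (fun z => r • n z) (r • fderiv ℝ n x) x := hnx.const_smul r
    have houter : HasFDerivAt uj (fderiv ℝ uj (r • n x)) (r • n x) :=
      ((hujc.differentiable one_ne_zero) _).hasFDerivAt
    have hcomp := houter.comp x hscale
    have := hcomp.mul_const (r^k)
    refine HasFDerivAt.congr_fderiv this ?_
    rw [ContinuousLinearMap.comp_smul, smul_smul]
  -- bound
  have h_bound : ∀ᵐ r ∂(volume : Measure ℝ), r ∈ Set.uIoc (1:ℝ) (1+ε) →
      ∀ x ∈ ball y (1/2), ‖F' x r‖ ≤ 2^(k+1) * (C1 * C2) := by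
    refine Filter.Eventually.of_forall ?_
    intro r hr x hx
    have hx0 := hball x hx
    rw [Set.uIoc_of_le (by linarith)] at hr
    have hr1 : 1 < r := hr.1
    have hr2 : r ≤ 2 := by linarith [hr.2]
    have hrnn : (0:ℝ) ≤ r := by linarith
    have hmem : r • n x ∈ closedBall (0:E3) 2 := by
      rw [mem_closedBall, dist_zero_right, norm_smul, hnx_norm x hx0]
      simp [abs_of_nonneg hrnn]
      linarith
    have h1 : ‖fderiv ℝ uj (r • n x)‖ ≤ C1 := hC1 _ hmem
    have h2 : ‖fderiv ℝ n x‖ ≤ C2 := hC2 x (ball_subset_closedBall hx)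
    have habs : |r| = r := abs_of_nonneg hrnn
    calc ‖F' x r‖ ≤ (|r|^k * |r|) * ‖(fderiv ℝ uj (r • n x)).comp (fderiv ℝ n x)‖ := by
          have := ContinuousLinearMap.opNorm_smul_le (r^k*r)
            ((fderiv ℝ uj (r • n x)).comp (fderiv ℝ n x))
          simpa [Real.norm_eq_abs, abs_mul, abs_pow] using this
      _ ≤ (|r|^k * |r|) * (‖fderiv ℝ uj (r • n x)‖ * ‖fderiv ℝ n x‖) :=
          mul_le_mul_of_nonneg_left (ContinuousLinearMap.opNorm_comp_le _ _) (by positivity)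
      _ ≤ 2^(k+1) * (C1 * C2) := by
          apply mul_le_mul
          · rw [habs, pow_succ]
            exact mul_le_mul (pow_le_pow_left₀ hrnn hr2 k) hr2 hrnn (by positivity)
          · exact mul_le_mul h1 h2 (norm_nonneg _) hC1'
          · positivity
          · positivity
  -- measurability statements
  have hF_meas : ∀ᶠ x in nhds y, AEStronglyMeasurable (F x)
      ((volume : Measure ℝ).restrict (Set.uIoc (1:ℝ) (1+ε))) := by
    filter_upwards [ball_mem_nhds y (by norm_num : (0:ℝ) < 1/2)] with x hx
    have : Continuous (fun r : ℝ => F x r) := by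
      exact (hcont_uj.comp ((continuous_id.smul continuous_const))).mul (continuous_pow k)
    exact this.aestronglyMeasurable
  have hF_int : IntervalIntegrable (F y) volume 1 (1+ε) := by
    have : Continuous (fun r : ℝ => F y r) :=
      (hcont_uj.comp ((continuous_id.smul continuous_const))).mul (continuous_pow k)
    exact this.intervalIntegrable _ _
  have hF'_cont : Continuous (F' y) := by
    apply Continuous.smul ((continuous_pow k).mul continuous_id)
    exact (hcont_fuj.comp (continuous_id.smul continuous_const)).clm_comp continuous_const
  have hF'_meas : AEStronglyMeasurable (F' y)
      ((volume : Measure ℝ).restrict (Set.uIoc (1:ℝ) (1+ε))) := hF'_cont.aestronglyMeasurable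
  have := intervalIntegral.hasFDerivAt_integral_of_dominated_of_fderiv_le
    (μ := volume) (a := 1) (b := 1+ε) (F := F) (F' := F') (x₀ := y) (bound := fun _ => 2^(k+1) * (C1 * C2))
    (ball_mem_nhds y (by norm_num : (0:ℝ) < 1/2)) hF_meas hF_int hF'_meas h_bound
    (intervalIntegrable_const) (Filter.Eventually.of_forall (fun r _ => h_diff r))
  exact this

lemma lemB (ε : ℝ) (hε0 : 0 < ε) (hε1 : ε < 1) (k : ℕ)
    (u : E3 → E3) (hu : ContDiff ℝ 1 u)
    (y : E3) (hy : ‖y‖ = 1) (j i : Fin 3) :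
    fderiv ℝ (fun x : E3 => avgV ε k u (‖x‖⁻¹ • x) j) y (EuclideanSpace.single i 1)
      = (1/ε) * ∫ r in (1:ℝ)..(1+ε),
          (fderiv ℝ (fun z => u z j) (r • y)) (EuclideanSpace.single i 1 - y i • y) * (r^k * r) := by
  have hA := lemA ε hε0 hε1 k u hu j y hy
  have hny : (‖y‖⁻¹ • y : E3) = y := by rw [hy]; simp
  rw [hny] at hA
  have heq : (fun x : E3 => avgV ε k u (‖x‖⁻¹ • x) j)
      = fun x : E3 => (1/ε) * ∫ r in (1:ℝ)..(1+ε), u (r • (‖x‖⁻¹ • x)) j * r^k := rfl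
  have hB := hA.const_mul (1/ε)
  have hfd := hB.fderiv
  rw [heq, hfd, ContinuousLinearMap.smul_apply]
  have hint : IntervalIntegrable (fun r : ℝ =>
      (r^k * r) • ((fderiv ℝ (fun z => u z j) (r • y)).comp
        (fderiv ℝ (fun x : E3 => ‖x‖⁻¹ • x) y))) volume 1 (1+ε) := by
    apply Continuous.intervalIntegrable
    exact (((continuous_pow k).mul continuous_id).smul
      ((((uj_contDiff u hu j).continuous_fderiv one_ne_zero).comp
        (continuous_id.smul continuous_const)).clm_comp continuous_const))
  rw [ContinuousLinearMap.intervalIntegral_apply hint, smul_eq_mul]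
  congr 1
  apply intervalIntegral.integral_congr
  intro r hr
  simp only [ContinuousLinearMap.smul_apply, ContinuousLinearMap.comp_apply]
  rw [(hasFDerivAt_nmap y hy).fderiv]
  have : (ContinuousLinearMap.id ℝ E3 - (innerSL ℝ y).smulRight y) (EuclideanSpace.single i 1)
      = EuclideanSpace.single i 1 - y i • y := by
    simp [ContinuousLinearMap.smulRight_apply, EuclideanSpace.inner_single_right]
  rw [this, smul_eq_mul]
  ring

/-- `div_{S²}(M_ε^k u) = M_ε^{k+1}(div u) + (k+1) M_ε^k(u·n̄)` on `S²`
for `u` with `u·n_ε = 0` on `∂Ω_ε`. -/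
theorem stmt17 (ε : ℝ) (hε0 : 0 < ε) (hε1 : ε < 1) (k : ℕ)
    (u : E3 → E3) (hu : ContDiff ℝ 1 u)
    (hb1 : ∀ y : E3, ‖y‖ = 1 → ⟪u y, y⟫ = 0)
    (hb2 : ∀ y : E3, ‖y‖ = 1 → ⟪u ((1+ε) • y), y⟫ = 0)
    (y : E3) (hy : ‖y‖ = 1) :
    sdiv (avgV ε k u) y
      = (1/ε) * (∫ r in (1:ℝ)..(1+ε), div3 u (r • y) * r ^ (k+1))
        + ((k : ℝ) + 1) * ((1/ε) * ∫ r in (1:ℝ)..(1+ε), ⟪u (r • y), y⟫ * r ^ k) := by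
  classical
  have hsq := sum_sq_one y hy
  have hujc : ∀ j : Fin 3, ContDiff ℝ 1 (fun z => u z j) := uj_contDiff u hu
  obtain ⟨a, ha⟩ : ∃ a : ℝ → Fin 3 → Fin 3 → ℝ, ∀ r j i,
      a r j i = (fderiv ℝ (fun z => u z j) (r • y)) (EuclideanSpace.single i 1) :=
    ⟨_, fun _ _ _ => rfl⟩
  obtain ⟨g, hg⟩ : ∃ g : ℝ → Fin 3 → ℝ, ∀ r j,
      g r j = (fderiv ℝ (fun z => u z j) (r • y)) y := ⟨_, fun _ _ => rfl⟩
  have hcont_a : ∀ j i, Continuous (fun r => a r j i) := by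
    intro j i
    simp only [ha]
    exact ((((hujc j).continuous_fderiv one_ne_zero).comp
      (continuous_id.smul continuous_const)).clm_apply continuous_const)
  have hcont_g : ∀ j, Continuous (fun r => g r j) := by
    intro j
    simp only [hg]
    exact ((((hujc j).continuous_fderiv one_ne_zero).comp
      (continuous_id.smul continuous_const)).clm_apply continuous_const)
  have hga : ∀ (r : ℝ) (j : Fin 3), ∑ i, y i * a r j i = g r j := by
    intro r j
    simp only [ha, hg]
    exact (clm_apply_eq_sum _ y).symm
  -- Step 1 : rewrite sdiv via lemB
  have hstep1 : sdiv (avgV ε k u) y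
      = ∑ j, ∑ i, proj3 y j i *
          ((1/ε) * ∫ r in (1:ℝ)..(1+ε), (a r j i - y i * g r j) * r^(k+1)) := by
    unfold sdiv
    refine Finset.sum_congr rfl (fun j _ => Finset.sum_congr rfl (fun i _ => ?_))
    rw [lemB ε hε0 hε1 k u hu y hy j i]
    have hInt : (∫ r in (1:ℝ)..(1+ε),
          (fderiv ℝ (fun z => u z j) (r • y)) (EuclideanSpace.single i 1 - y i • y) * (r^k * r))
        = ∫ r in (1:ℝ)..(1+ε), (a r j i - y i * g r j) * r^(k+1) := by
      apply intervalIntegral.integral_congr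
      intro r _
      show (fderiv ℝ (fun z => u z j) (r • y)) (EuclideanSpace.single i 1 - y i • y) * (r^k * r)
        = (a r j i - y i * g r j) * r^(k+1)
      rw [map_sub, ContinuousLinearMap.map_smul, pow_succ]
      simp only [smul_eq_mul, ha, hg]
    rw [hInt]
  have hint1 : ∀ j i, IntervalIntegrable
      (fun r => (a r j i - y i * g r j) * r^(k+1)) volume 1 (1+ε) := fun j i =>
    (((hcont_a j i).sub (continuous_const.mul (hcont_g j))).mul
      (continuous_pow (k+1))).intervalIntegrable _ _
  -- Step 2 : pull the sums inside the integral
  have e1 : ∀ j : Fin 3, (∫ r in (1:ℝ)..(1+ε),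
        ∑ i, proj3 y j i * ((a r j i - y i * g r j) * r^(k+1)))
      = ∑ i, proj3 y j i * ∫ r in (1:ℝ)..(1+ε), (a r j i - y i * g r j) * r^(k+1) := by
    intro j
    rw [intervalIntegral.integral_finset_sum (fun i _ => (hint1 j i).const_mul _)]
    exact Finset.sum_congr rfl fun i _ => intervalIntegral.integral_const_mul _ _
  have e2 : (∫ r in (1:ℝ)..(1+ε),
        ∑ j, ∑ i, proj3 y j i * ((a r j i - y i * g r j) * r^(k+1)))
      = ∑ j, ∑ i, proj3 y j i *
          ∫ r in (1:ℝ)..(1+ε), (a r j i - y i * g r j) * r^(k+1) := by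
    have hintsum : ∀ j : Fin 3, IntervalIntegrable
        (fun r => ∑ i, proj3 y j i * ((a r j i - y i * g r j) * r^(k+1))) volume 1 (1+ε) :=
      fun j => IntervalIntegrable.sum
        (f := fun i r => proj3 y j i * ((a r j i - y i * g r j) * r^(k+1)))
        Finset.univ (fun i _ => (hint1 j i).const_mul _)
    rw [intervalIntegral.integral_finset_sum (fun j _ => hintsum j)]
    exact Finset.sum_congr rfl fun j _ => e1 j
  have hstep2 : sdiv (avgV ε k u) y
      = (1/ε) * ∫ r in (1:ℝ)..(1+ε),
          ∑ j, ∑ i, proj3 y j i * ((a r j i - y i * g r j) * r^(k+1)) := by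
    rw [hstep1, e2, Finset.mul_sum]
    refine Finset.sum_congr rfl fun j _ => ?_
    rw [Finset.mul_sum]
    exact Finset.sum_congr rfl fun i _ => by ring
  -- Step 3 : pointwise identity
  have hstep3 : ∀ r : ℝ, ∑ j, ∑ i, proj3 y j i * ((a r j i - y i * g r j) * r^(k+1))
      = div3 u (r • y) * r^(k+1) - (∑ j, y j * g r j) * r^(k+1) := by
    intro r
    have hj : ∀ j, ∑ i, proj3 y j i * (a r j i - y i * g r j) = a r j j - y j * g r j := by
      intro j
      have := key_sum (fun i => y i) (fun i => a r j i) (g r j) hsq (hga r j) j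
      simpa [proj3] using this
    calc ∑ j, ∑ i, proj3 y j i * ((a r j i - y i * g r j) * r^(k+1))
        = ∑ j, (∑ i, proj3 y j i * (a r j i - y i * g r j)) * r^(k+1) := by
          refine Finset.sum_congr rfl fun j _ => ?_
          rw [Finset.sum_mul]
          exact Finset.sum_congr rfl fun i _ => by ring
      _ = ∑ j, (a r j j - y j * g r j) * r^(k+1) := by
          exact Finset.sum_congr rfl fun j _ => by rw [hj j]
      _ = (∑ j, a r j j) * r^(k+1) - (∑ j, y j * g r j) * r^(k+1) := by
          rw [Finset.sum_mul, Finset.sum_mul, ← Finset.sum_sub_distrib]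
          exact Finset.sum_congr rfl fun j _ => by ring
      _ = div3 u (r • y) * r^(k+1) - (∑ j, y j * g r j) * r^(k+1) := by
          have : (∑ j, a r j j) = div3 u (r • y) := by
            simp only [ha, div3]
          rw [this]
  -- integrability of the two pieces
  have hcont_div : Continuous (fun r : ℝ => div3 u (r • y)) := by
    have : (fun r : ℝ => div3 u (r • y)) = fun r => ∑ j, a r j j := by
      funext r
      simp only [ha, div3]
    rw [this]
    exact continuous_finset_sum _ fun j _ => hcont_a j j
  have hintA : IntervalIntegrable (fun r : ℝ => div3 u (r • y) * r^(k+1)) volume 1 (1+ε) :=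
    (hcont_div.mul (continuous_pow (k+1))).intervalIntegrable _ _
  have hcont_B : Continuous (fun r : ℝ => (∑ j, y j * g r j) * r^(k+1)) :=
    (continuous_finset_sum _ fun j _ => continuous_const.mul (hcont_g j)).mul (continuous_pow (k+1))
  have hintB : IntervalIntegrable (fun r : ℝ => (∑ j, y j * g r j) * r^(k+1)) volume 1 (1+ε) :=
    hcont_B.intervalIntegrable _ _
  -- IBP
  obtain ⟨gf, hgf⟩ : ∃ gf : ℝ → ℝ, ∀ r, gf r = ∑ j, u (r • y) j * y j := ⟨_, fun _ => rfl⟩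
  have hgf_fun : gf = fun r => ∑ j, u (r • y) j * y j := funext hgf
  have hgf_inner : ∀ r : ℝ, ⟪u (r • y), y⟫ = gf r := by
    intro r
    rw [hgf]
    exact inner_eq_sum _ _
  have hgf_deriv : ∀ r : ℝ, HasDerivAt gf (∑ j, g r j * y j) r := by
    intro r
    rw [hgf_fun]
    simp only [hg]
    apply HasDerivAt.fun_sum
    intro j _
    have h1 : HasDerivAt (fun s : ℝ => s • y) y r := by
      simpa using (hasDerivAt_id r).smul_const y
    have h2 : HasFDerivAt (fun z => u z j) (fderiv ℝ (fun z => u z j) (r • y)) (r • y) :=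
      (((hujc j).differentiable one_ne_zero) _).hasFDerivAt
    exact (h2.comp_hasDerivAt r h1).mul_const (y j)
  have hcont_gf : Continuous gf := by
    rw [hgf_fun]
    exact continuous_finset_sum _ fun j _ =>
      (((hujc j).continuous).comp (continuous_id.smul continuous_const)).mul continuous_const
  have hcont_gf' : Continuous (fun r : ℝ => ∑ j, g r j * y j) :=
    continuous_finset_sum _ fun j _ => (hcont_g j).mul continuous_const
  have hupow : ∀ r : ℝ, HasDerivAt (fun s : ℝ => s^(k+1)) (((k:ℝ)+1) * r^k) r := by
    intro r
    have := hasDerivAt_pow (k+1) r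
    simpa [Nat.cast_add, Nat.cast_one] using this
  have hibp := intervalIntegral.integral_mul_deriv_eq_deriv_mul
    (a := (1:ℝ)) (b := 1+ε)
    (u := fun r : ℝ => r^(k+1)) (u' := fun r : ℝ => ((k:ℝ)+1) * r^k)
    (v := gf) (v' := fun r : ℝ => ∑ j, g r j * y j)
    (fun r _ => hupow r) (fun r _ => hgf_deriv r)
    ((continuous_const.mul (continuous_pow k)).intervalIntegrable _ _)
    (hcont_gf'.intervalIntegrable _ _)
  have hb1' : gf 1 = 0 := by
    rw [← hgf_inner]
    have := hb1 y hy
    simpa using this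
  have hb2' : gf (1+ε) = 0 := by
    rw [← hgf_inner]
    exact hb2 y hy
  rw [hb1', hb2'] at hibp
  -- relate the B-integral to the IBP identity
  have hBint : (∫ r in (1:ℝ)..(1+ε), (∑ j, y j * g r j) * r^(k+1))
      = ∫ r in (1:ℝ)..(1+ε), r^(k+1) * (∑ j, g r j * y j) := by
    apply intervalIntegral.integral_congr
    intro r _
    show (∑ j, y j * g r j) * r^(k+1) = r^(k+1) * (∑ j, g r j * y j)
    rw [Finset.sum_mul, Finset.mul_sum]
    exact Finset.sum_congr rfl fun j _ => by ring
  have hCint : (∫ r in (1:ℝ)..(1+ε), ((k:ℝ)+1) * r^k * gf r)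
      = ((k:ℝ)+1) * ∫ r in (1:ℝ)..(1+ε), gf r * r^k := by
    rw [← intervalIntegral.integral_const_mul]
    apply intervalIntegral.integral_congr
    intro r _
    show ((k:ℝ)+1) * r^k * gf r = ((k:ℝ)+1) * (gf r * r^k)
    ring
  have hgfint : (∫ r in (1:ℝ)..(1+ε), ⟪u (r • y), y⟫ * r^k)
      = ∫ r in (1:ℝ)..(1+ε), gf r * r^k := by
    apply intervalIntegral.integral_congr
    intro r _
    show ⟪u (r • y), y⟫ * r^k = gf r * r^k
    rw [hgf_inner]
  -- assemble
  rw [hstep2, intervalIntegral.integral_congr (fun r _ => hstep3 r),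
    intervalIntegral.integral_sub hintA hintB, hgfint, hBint]
  rw [hCint] at hibp
  rw [hibp]
  ring
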